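/- Let M be a simple matroid of rank k+1 (k ≥ 2) with a 2-colouring (R,B) of its ground set such that every hyperplane of M contains an element of R. If L is a line of M and there exists a rank-(k−1) flat F of M skew to L with F ∩ R = ∅, then |L| ≤ |R|. -/

import Mathlib

open Set
open scoped Classical

namespace MatroidPaper

variable {α : Type*}

/-- The rank of a set in a matroid: the supremum of cardinalities of independent subsets. -/
noncomputable def rkS (M : Matroid α) (X : Set α) : ℕ :=
  sSup {n | ∃ I, M.Indep I ∧ I ⊆ X ∧ I.ncard = n}

/-- The rank of a matroid. -/
noncomputable def rk (M : Matroid α) : ℕ := rkS M M.E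

/-- A hyperplane: a flat of rank `rk M - 1`. -/
def Hyp (M : Matroid α) (H : Set α) : Prop := M.IsFlat H ∧ rkS M H = rk M - 1

/-- Two sets are skew if the rank of their union is the sum of their ranks. -/
def SkewSets (M : Matroid α) (X Y : Set α) : Prop :=
  rkS M (X ∪ Y) = rkS M X + rkS M Y

/-- A simple matroid: every subset of the ground set with at most two elements is independent. -/
def SimpleM (M : Matroid α) : Prop := ∀ X ⊆ M.E, X.ncard ≤ 2 → M.Indep X

/-- A real-representable matroid. -/
def RealRep (M : Matroid α) : Prop :=
  ∃ (n : ℕ) (φ : α → (Fin n → ℝ)), ∀ I, I ⊆ M.E →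
    (M.Indep I ↔ LinearIndependent ℝ (fun x : I => φ x))

/-- A matroid is `k`-degenerate if it has rank at most one or its ground set is covered by
flats of rank at least two with `∑ (r(Fᵢ) - 1) ≤ k - 1`. -/
def Degen (M : Matroid α) (k : ℕ) : Prop :=
  rk M ≤ 1 ∨ ∃ (t : ℕ) (F : Fin t → Set α),
    (∀ i, M.IsFlat (F i) ∧ 2 ≤ rkS M (F i)) ∧
    M.E ⊆ ⋃ i, F i ∧ ∑ i, (rkS M (F i) - 1) ≤ k - 1

/-- A set `X` is `k`-degenerate in `M` if the restriction `M|X` is a `k`-degenerate matroid. -/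
def DegenSet (M : Matroid α) (X : Set α) (k : ℕ) : Prop := Degen (M.restrict X) k

/-- `N` is the (one-fold) principal truncation of `F` in `M`. -/
noncomputable def IsPT (M : Matroid α) (F : Set α) (N : Matroid α) : Prop :=
  N.E = M.E ∧ ∀ X ⊆ M.E,
    rkS N X = if F ⊆ M.closure X then rkS M X - 1 else rkS M X

/-- `N` is the complete principal truncation `M ÷ F` of `F` in `M`. -/
def IsCPT (M : Matroid α) (F : Set α) (N : Matroid α) : Prop :=
  N.E = M.E ∧ ∀ X ⊆ M.E,
    rkS N X = min (rkS M X + (rkS M F - 1)) (rkS M (X ∪ F)) - (rkS M F - 1)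

variable {M : Matroid α} {I J X Y F H K : Set α} {e x : α}

lemma flat_closure (M : Matroid α) (X : Set α) : M.IsFlat (M.closure X) := by
  rw [Matroid.closure_def, sInter_eq_iInter]
  have hne : Nonempty ({F | M.IsFlat F ∧ X ∩ M.E ⊆ F} : Set (Set α)) :=
    ⟨⟨M.E, M.ground_isFlat, inter_subset_right⟩⟩
  exact Matroid.IsFlat.iInter (fun F => (F.2 : M.IsFlat F.1 ∧ X ∩ M.E ⊆ F.1).1)

lemma basis'_ncard_eq (h1 : M.IsBasis' I X) (h2 : M.IsBasis' J X) : I.ncard = J.ncard :=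
  Matroid.IsBase.ncard_eq_ncard_of_isBase
    (Matroid.isBase_restrict_iff'.2 h1) (Matroid.isBase_restrict_iff'.2 h2)

lemma rkS_eq_ncard [M.Finite] (hI : M.IsBasis' I X) : rkS M X = I.ncard := by
  have hub : ∀ n ∈ {n | ∃ I', M.Indep I' ∧ I' ⊆ X ∧ I'.ncard = n}, n ≤ I.ncard := by
    rintro n ⟨J, hJ, hJX, rfl⟩
    obtain ⟨J', hJ', hJJ'⟩ := hJ.subset_isBasis'_of_subset hJX
    calc J.ncard ≤ J'.ncard :=
          ncard_le_ncard hJJ' (M.set_finite J' hJ'.indep.subset_ground)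
    _ = I.ncard := basis'_ncard_eq hJ' hI
  have hmem : I.ncard ∈ {n | ∃ I', M.Indep I' ∧ I' ⊆ X ∧ I'.ncard = n} :=
    ⟨I, hI.indep, hI.subset, rfl⟩
  exact le_antisymm (csSup_le ⟨_, hmem⟩ hub) (le_csSup ⟨_, hub⟩ hmem)

lemma le_rkS [M.Finite] (hJ : M.Indep J) (hJX : J ⊆ X) : J.ncard ≤ rkS M X := by
  obtain ⟨I, hI⟩ := M.exists_isBasis' X
  rw [rkS_eq_ncard hI]
  obtain ⟨J', hJ', hJJ'⟩ := hJ.subset_isBasis'_of_subset hJX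
  calc J.ncard ≤ J'.ncard := ncard_le_ncard hJJ' (M.set_finite J' hJ'.indep.subset_ground)
  _ = I.ncard := basis'_ncard_eq hJ' hI

lemma rkS_mono [M.Finite] (h : X ⊆ Y) : rkS M X ≤ rkS M Y := by
  obtain ⟨I, hI⟩ := M.exists_isBasis' X
  rw [rkS_eq_ncard hI]
  exact le_rkS hI.indep (hI.subset.trans h)

lemma rkS_indep [M.Finite] (h : M.Indep I) : rkS M I = I.ncard :=
  rkS_eq_ncard h.isBasis_self.isBasis'

lemma rkS_closure [M.Finite] (X : Set α) : rkS M (M.closure X) = rkS M X := by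
  obtain ⟨I, hI⟩ := M.exists_isBasis' X
  rw [rkS_eq_ncard hI, rkS_eq_ncard hI.isBasis_closure_right.isBasis']

lemma rkS_submod [M.Finite] (X Y : Set α) :
    rkS M (X ∪ Y) + rkS M (X ∩ Y) ≤ rkS M X + rkS M Y := by
  obtain ⟨I, hI⟩ := M.exists_isBasis' (X ∩ Y)
  obtain ⟨J, hJ, hIJ⟩ := hI.indep.subset_isBasis'_of_subset
    (hI.subset.trans (inter_subset_left.trans subset_union_left))
  have hJfin : J.Finite := M.set_finite J hJ.indep.subset_ground
  rw [rkS_eq_ncard hJ, rkS_eq_ncard hI]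
  have h1 : (J ∩ X).ncard ≤ rkS M X :=
    le_rkS (hJ.indep.subset inter_subset_left) inter_subset_right
  have h2 : (J ∩ Y).ncard ≤ rkS M Y :=
    le_rkS (hJ.indep.subset inter_subset_left) inter_subset_right
  have hu : (J ∩ X) ∪ (J ∩ Y) = J := by
    rw [← inter_union_distrib_left, inter_eq_left]; exact hJ.subset
  have hIsub : I ⊆ (J ∩ X) ∩ (J ∩ Y) := fun a ha =>
    ⟨⟨hIJ ha, (hI.subset ha).1⟩, hIJ ha, (hI.subset ha).2⟩
  calc J.ncard + I.ncard
      ≤ J.ncard + ((J ∩ X) ∩ (J ∩ Y)).ncard :=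
        Nat.add_le_add_left
          (ncard_le_ncard hIsub (hJfin.subset (inter_subset_left.trans inter_subset_left))) _
    _ = (J ∩ X).ncard + (J ∩ Y).ncard := by
        rw [← ncard_union_add_ncard_inter _ _ (hJfin.inter_of_left X) (hJfin.inter_of_left Y), hu]
    _ ≤ rkS M X + rkS M Y := by gcongr

lemma rkS_singleton_le (M : Matroid α) (x : α) : rkS M {x} ≤ 1 := by
  have hub : ∀ n ∈ {n | ∃ I, M.Indep I ∧ I ⊆ ({x} : Set α) ∧ I.ncard = n}, n ≤ 1 := by
    rintro n ⟨J, _, hJX, rfl⟩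
    calc J.ncard ≤ ({x} : Set α).ncard := ncard_le_ncard hJX (finite_singleton x)
    _ = 1 := ncard_singleton x
  have hmem : 0 ∈ {n | ∃ I, M.Indep I ∧ I ⊆ ({x} : Set α) ∧ I.ncard = n} :=
    ⟨∅, M.empty_indep, empty_subset _, by simp⟩
  exact csSup_le ⟨0, hmem⟩ hub

lemma rkS_insert_eq [M.Finite] (hx : x ∈ M.E) (h : x ∉ M.closure X) :
    rkS M (insert x X) = rkS M X + 1 := by
  obtain ⟨I, hI⟩ := M.exists_isBasis' X
  have hxI : x ∉ M.closure I := by rwa [hI.closure_eq_closure]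
  have hind : M.Indep (insert x I) := hI.indep.insert_indep_iff.2 (Or.inl ⟨hx, hxI⟩)
  have hxnI : x ∉ I := fun hmem => hxI (M.subset_closure I hI.indep.subset_ground hmem)
  apply le_antisymm
  · have hsub := rkS_submod (M := M) X {x}
    have hs1 := rkS_singleton_le M x
    have : rkS M (insert x X) = rkS M (X ∪ {x}) := by rw [union_singleton]
    omega
  · rw [rkS_eq_ncard hI]
    have hle := le_rkS hind (insert_subset_insert hI.subset)
    rwa [ncard_insert_of_notMem hxnI (M.set_finite I hI.indep.subset_ground)] at hle

lemma flat_eq_of_subset_rkS_le [M.Finite] (hK : M.IsFlat K) (hH : M.IsFlat H) (hKH : K ⊆ H)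
    (hr : rkS M H ≤ rkS M K) : K = H := by
  obtain ⟨I, hI⟩ := M.exists_isBasis' K
  obtain ⟨J, hJ, hIJ⟩ := hI.indep.subset_isBasis'_of_subset (hI.subset.trans hKH)
  have hJI : J = I := by
    refine (eq_of_subset_of_ncard_le hIJ ?_ (M.set_finite J hJ.indep.subset_ground)).symm
    rw [← rkS_eq_ncard hI, ← rkS_eq_ncard hJ]; exact hr
  have h1 : H ⊆ M.closure J :=
    (M.subset_closure H hH.subset_ground).trans hJ.isBasis_closure_right.subset_closure
  rw [hJI, hI.closure_eq_closure, hK.closure] at h1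
  exact subset_antisymm hKH h1


/-- If some rank-`(k-1)` flat skew to the line `L` avoids `R`, then `|L| ≤ |R|`. -/
theorem stmt8 (k : ℕ) (hk : 2 ≤ k) (M : Matroid α) [M.Finite] (hs : SimpleM M)
    (hr : rk M = k + 1) (R B : Set α) (hRB : R ∪ B = M.E) (hd : Disjoint R B)
    (hhyp : ∀ H, Hyp M H → (H ∩ R).Nonempty)
    (L : Set α) (hL : M.IsFlat L) (hL2 : rkS M L = 2)
    (F : Set α) (hF : M.IsFlat F) (hFr : rkS M F = k - 1)
    (hskew : SkewSets M F L) (hFR : F ∩ R = ∅) :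
    L.ncard ≤ R.ncard := by
  have hLE : L ⊆ M.E := hL.subset_ground
  have hFE : F ⊆ M.E := hF.subset_ground
  have hRE : R ⊆ M.E := hRB ▸ subset_union_left
  rw [SkewSets, hFr, hL2] at hskew
  have hsingle : ∀ y ∈ M.E, M.Indep {y} := fun y hy =>
    hs {y} (singleton_subset_iff.2 hy) (by rw [ncard_singleton]; omega)
  have hpair : ∀ y z, y ∈ M.E → z ∈ M.E → y ≠ z → rkS M {y, z} = 2 := by
    intro y z hy hz hyz
    rw [rkS_indep (hs {y, z} (by rw [insert_subset_iff, singleton_subset_iff]; exact ⟨hy, hz⟩)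
      (le_of_eq (ncard_pair hyz))), ncard_pair hyz]
  -- F and L are disjoint
  have hFL : F ∩ L = ∅ := by
    by_contra h
    obtain ⟨y, hy⟩ := nonempty_iff_ne_empty.2 h
    have h0 := rkS_submod (M := M) F L
    have h1 : (1 : ℕ) ≤ rkS M (F ∩ L) := by
      have hh := le_rkS (hsingle y (hFE hy.1)) (singleton_subset_iff.2 hy)
      rwa [ncard_singleton] at hh
    omega
  have hFLr : rkS M (F ∪ L) = k + 1 := by omega
  -- rank of F ∪ {e} for e ∈ L
  have hFe : ∀ e ∈ L, rkS M (F ∪ {e}) = k := by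
    intro e he
    have hle : rkS M (F ∪ {e}) ≤ k := by
      have h1 := rkS_submod (M := M) F {e}
      have h2 := rkS_singleton_le M e
      omega
    have hge : k ≤ rkS M (F ∪ {e}) := by
      have h1 := rkS_submod (M := M) (F ∪ {e}) L
      have h2 : (F ∪ {e}) ∪ L = F ∪ L := by
        rw [union_assoc, singleton_union, insert_eq_of_mem he]
      have h3 : (F ∪ {e}) ∩ L = {e} := by
        rw [union_inter_distrib_right, hFL, empty_union,
          inter_eq_left.2 (singleton_subset_iff.2 he)]
      rw [h2, h3, hFLr, hL2] at h1
      have h4 : rkS M {e} = 1 := by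
        rw [rkS_indep (hsingle e (hLE he)), ncard_singleton]
      omega
    omega
  -- rank of F ∪ {e, e'}
  have hFee : ∀ e ∈ L, ∀ e' ∈ L, e ≠ e' → k + 1 ≤ rkS M (F ∪ {e, e'}) := by
    intro e he e' he' hne
    have h1 := rkS_submod (M := M) (F ∪ {e, e'}) L
    have hsub : ({e, e'} : Set α) ⊆ L := by
      rw [insert_subset_iff, singleton_subset_iff]; exact ⟨he, he'⟩
    have h2 : (F ∪ {e, e'}) ∪ L = F ∪ L := by
      rw [union_assoc, union_eq_self_of_subset_left hsub]
    have h3 : (F ∪ {e, e'}) ∩ L = {e, e'} := by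
      rw [union_inter_distrib_right, hFL, empty_union, inter_eq_left.2 hsub]
    rw [h2, h3, hFLr, hL2, hpair e e' (hLE he) (hLE he') hne] at h1
    omega
  -- the hyperplanes
  set Hy : α → Set α := fun e => M.closure (F ∪ {e}) with hHy
  have hHyr : ∀ e ∈ L, rkS M (Hy e) = k := fun e he => by
    rw [hHy]; rw [rkS_closure (F ∪ {e})]; exact hFe e he
  have hHyp : ∀ e ∈ L, Hyp M (Hy e) := by
    intro e he
    exact ⟨flat_closure M _, by rw [hHyr e he, hr]; omega⟩
  have hFsub : ∀ e ∈ L, F ∪ {e} ⊆ Hy e := fun e he =>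
    M.subset_closure _ (union_subset hFE (singleton_subset_iff.2 (hLE he)))
  have hnotmem : ∀ e ∈ L, ∀ e' ∈ L, e ≠ e' → e' ∉ Hy e := by
    intro e he e' he' hne hmem
    have hsub : F ∪ {e, e'} ⊆ Hy e := by
      rw [union_subset_iff, insert_subset_iff, singleton_subset_iff]
      exact ⟨(subset_union_left.trans (hFsub e he)),
        (hFsub e he) (mem_union_right _ rfl), hmem⟩
    have := rkS_mono (M := M) hsub
    rw [hHyr e he] at this
    have := hFee e he e' he' hne
    omega
  -- choose red elements
  have hex : ∀ e ∈ L, ∃ y, y ∈ Hy e ∩ R := fun e he => hhyp (Hy e) (hHyp e he)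
  choose! g hg using hex
  have hinj : InjOn g L := by
    intro e he e' he' heq
    by_contra hne
    have h1 := hg e he
    have h2 := hg e' he'
    rw [heq] at h1
    set y := g e' with hy
    have hyR : y ∈ R := h1.2
    have hyF : y ∉ F := fun hmem => (eq_empty_iff_forall_notMem.1 hFR y) ⟨hmem, hyR⟩
    have hyE : y ∈ M.E := hRE hyR
    have hycl : y ∉ M.closure F := by rwa [hF.closure]
    have hKr : rkS M (F ∪ {y}) = k := by
      rw [union_singleton, rkS_insert_eq hyE hycl, hFr]; omega
    have hKsub : ∀ e'' ∈ L, y ∈ Hy e'' → M.closure (F ∪ {y}) = Hy e'' := by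
      intro e'' he'' hmem
      refine flat_eq_of_subset_rkS_le (flat_closure M _) (flat_closure M _) ?_ ?_
      · have : F ∪ {y} ⊆ Hy e'' := union_subset
          (subset_union_left.trans (hFsub e'' he'')) (singleton_subset_iff.2 hmem)
        calc M.closure (F ∪ {y}) ⊆ M.closure (Hy e'') := M.closure_subset_closure this
        _ = Hy e'' := (flat_closure M _).closure
      · rw [hHyr e'' he'', rkS_closure, hKr]
    have hEq : Hy e = Hy e' := by
      rw [← hKsub e he h1.1, hKsub e' he' h2.1]
    exact hnotmem e he e' he' hne (hEq ▸ (hFsub e' he') (mem_union_right _ rfl))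
  calc L.ncard = (g '' L).ncard := (ncard_image_of_injOn hinj).symm
  _ ≤ R.ncard := ncard_le_ncard (fun y hy => by
      obtain ⟨e, he, rfl⟩ := hy; exact (hg e he).2) (M.set_finite R hRE)


end MatroidPaper
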